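/- For every integer n ≥ 2, every induced subgraph of the n-dimensional hypercube graph Q_n that has a unique perfect matching contains at most 2^(n-1) vertices. That is, if A is a set of vertices of Q_n such that the subgraph of Q_n induced on A has exactly one perfect matching, then |A| ≤ 2^(n-1). -/

import Mathlib

/-- The `n`-dimensional hypercube graph: vertices are elements of `{0,1}^n`,
adjacent iff they differ in exactly one coordinate. -/
def hypercube (n : ℕ) : SimpleGraph (Fin n → ZMod 2) where
  Adj x y := ∃! i, x i ≠ y i
  symm := by constructor; rintro x y ⟨i, hi, hu⟩; exact ⟨i, Ne.symm hi, fun j hj => hu j (Ne.symm hj)⟩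
  loopless := by constructor; rintro x ⟨i, hi, -⟩; exact hi rfl

namespace UniquePMAux

variable {n : ℕ}

/-- standard basis vector -/
def eV (n : ℕ) (i : Fin n) : Fin n → ZMod 2 := Pi.single i 1

lemma zmod2_add_self : ∀ a : ZMod 2, a + a = 0 := by decide

lemma zmod2_ne_iff : ∀ a b : ZMod 2, a ≠ b ↔ b = a + 1 := by decide

lemma vadd_self (x : Fin n → ZMod 2) : x + x = 0 := by
  funext j; exact zmod2_add_self (x j)

lemma vadd_cancel (x y : Fin n → ZMod 2) : x + y + y = x := by
  rw [add_assoc, vadd_self, add_zero]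

lemma eV_inj {i j : Fin n} (h : eV n i = eV n j) : i = j := by
  by_contra hne
  have := congrFun h i
  rw [eV, eV, Pi.single_eq_same, Pi.single_eq_of_ne hne] at this
  exact one_ne_zero this

lemma add_eV_apply_self (x : Fin n → ZMod 2) (i : Fin n) : (x + eV n i) i = x i + 1 := by
  simp [eV, Pi.single_eq_same]

lemma add_eV_apply_ne (x : Fin n → ZMod 2) {i j : Fin n} (h : j ≠ i) :
    (x + eV n i) j = x j := by
  simp [eV, Pi.single_eq_of_ne h]

lemma zmod2_ne_add_one : ∀ a : ZMod 2, a ≠ a + 1 := by decide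

lemma adj_add_eV (x : Fin n → ZMod 2) (i : Fin n) : (hypercube n).Adj x (x + eV n i) := by
  refine ⟨i, ?_, fun j hj => ?_⟩
  · show x i ≠ (x + eV n i) i
    rw [add_eV_apply_self]
    exact zmod2_ne_add_one (x i)
  · show j = i
    by_contra hne
    exact hj (add_eV_apply_ne x hne).symm

lemma adj_iff (x y : Fin n → ZMod 2) :
    (hypercube n).Adj x y ↔ ∃ i, y = x + eV n i := by
  constructor
  · rintro ⟨i, hi, hu⟩
    refine ⟨i, funext fun j => ?_⟩
    by_cases hj : j = i
    · subst hj
      rw [add_eV_apply_self]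
      exact (zmod2_ne_iff _ _).1 hi
    · rw [add_eV_apply_ne x hj]
      by_contra hne
      exact hj (hu j (Ne.symm hne))
  · rintro ⟨i, rfl⟩; exact adj_add_eV x i

section Wf

variable {F : Type} [Field F] [CharP F 2] (w : Fin n → F)

/-- weighted adjacency function of the hypercube -/
def Wf (w : Fin n → F) (x y : Fin n → ZMod 2) : F :=
  ∑ i, if y = x + eV n i then w i else 0

lemma Wf_symm (x y : Fin n → ZMod 2) : Wf w x y = Wf w y x := by
  unfold Wf
  refine Finset.sum_congr rfl fun i _ => ?_
  refine if_congr ⟨fun h => ?_, fun h => ?_⟩ rfl rfl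
  · rw [h, vadd_cancel]
  · rw [h, vadd_cancel]

lemma Wf_adj {x y : Fin n → ZMod 2} (h : (hypercube n).Adj x y) :
    ∃ i, y = x + eV n i ∧ Wf w x y = w i := by
  obtain ⟨i, rfl⟩ := (adj_iff x y).1 h
  refine ⟨i, rfl, ?_⟩
  unfold Wf
  rw [Finset.sum_eq_single i]
  · rw [if_pos rfl]
  · intro j _ hji
    rw [if_neg]
    intro hEq
    exact hji (eV_inj (by rwa [add_right_inj] at hEq)).symm
  · intro hmem; exact absurd (Finset.mem_univ i) hmem

lemma Wf_not_adj {x y : Fin n → ZMod 2} (h : ¬ (hypercube n).Adj x y) :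
    Wf w x y = 0 := by
  unfold Wf
  refine Finset.sum_eq_zero fun i _ => ?_
  rw [if_neg]
  intro hEq
  exact h (hEq ▸ adj_add_eV x i)

lemma Wf_ne_zero_of_adj (hw : ∀ i, w i ≠ 0) {x y : Fin n → ZMod 2}
    (h : (hypercube n).Adj x y) : Wf w x y ≠ 0 := by
  obtain ⟨i, -, hWi⟩ := Wf_adj w h
  rw [hWi]; exact hw i

lemma Wf_mul (hsum : ∑ i, w i = 0) (x z : Fin n → ZMod 2) :
    ∑ y, Wf w x y * Wf w y z = 0 := by
  have step1 : ∀ y, Wf w x y * Wf w y z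
      = ∑ i, if y = x + eV n i then w i * Wf w y z else 0 := by
    intro y
    rw [Wf, Finset.sum_mul]
    refine Finset.sum_congr rfl fun i _ => ?_
    rw [ite_mul, zero_mul]
  calc ∑ y, Wf w x y * Wf w y z
      = ∑ y, ∑ i, if y = x + eV n i then w i * Wf w y z else 0 :=
        Finset.sum_congr rfl fun y _ => step1 y
    _ = ∑ i, ∑ y, if y = x + eV n i then w i * Wf w y z else 0 := Finset.sum_comm
    _ = ∑ i : Fin n, w i * Wf w (x + eV n i) z := by
        refine Finset.sum_congr rfl fun i _ => ?_
        rw [Finset.sum_ite_eq' Finset.univ (x + eV n i) (fun y => w i * Wf w y z)]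
        rw [if_pos (Finset.mem_univ _)]
    _ = ∑ i : Fin n, ∑ j : Fin n, if z = x + eV n i + eV n j then w i * w j else 0 := by
        refine Finset.sum_congr rfl fun i _ => ?_
        rw [Wf, Finset.mul_sum]
        refine Finset.sum_congr rfl fun j _ => ?_
        rw [mul_ite, mul_zero]
    _ = ∑ p ∈ Finset.univ ×ˢ Finset.univ,
          (if z = x + eV n p.1 + eV n p.2 then w p.1 * w p.2 else 0) := by
        rw [Finset.sum_product]
    _ = 0 := by
        have hsplit := Finset.sum_filter_add_sum_filter_not (Finset.univ ×ˢ Finset.univ)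
          (fun p : Fin n × Fin n => p.1 = p.2)
          (fun p => if z = x + eV n p.1 + eV n p.2 then w p.1 * w p.2 else 0)
        rw [← hsplit]
        have hdiag : ∑ p ∈ (Finset.univ ×ˢ Finset.univ).filter
            (fun p : Fin n × Fin n => p.1 = p.2),
            (if z = x + eV n p.1 + eV n p.2 then w p.1 * w p.2 else 0) = 0 := by
          have hbij : ∑ i : Fin n, (if z = x + eV n i + eV n i then w i * w i else 0)
              = ∑ p ∈ (Finset.univ ×ˢ Finset.univ).filter
                  (fun p : Fin n × Fin n => p.1 = p.2),
                  (if z = x + eV n p.1 + eV n p.2 then w p.1 * w p.2 else 0) := by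
            refine Finset.sum_nbij' (fun i => (i, i)) (fun p => p.1) ?_ ?_ ?_ ?_ ?_
            · intro i _; simp
            · intro p _; exact Finset.mem_univ _
            · intro i _; rfl
            · intro p hp
              simp only [Finset.mem_filter] at hp
              exact Prod.ext rfl hp.2
            · intro i _; rfl
          rw [← hbij]
          have heach : ∀ i : Fin n, (if z = x + eV n i + eV n i then w i * w i else 0)
              = if z = x then w i * w i else 0 := by
            intro i
            refine if_congr ?_ rfl rfl
            rw [vadd_cancel]
          rw [Finset.sum_congr rfl fun i _ => heach i]
          by_cases hz : z = x
          · simp only [if_pos hz]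
            rw [← CharTwo.sum_mul_self, hsum, mul_zero]
          · simp only [if_neg hz, Finset.sum_const_zero]
        have hoff : ∑ p ∈ (Finset.univ ×ˢ Finset.univ).filter
            (fun p : Fin n × Fin n => ¬ p.1 = p.2),
            (if z = x + eV n p.1 + eV n p.2 then w p.1 * w p.2 else 0) = 0 := by
          refine Finset.sum_involution (fun p _ => (p.2, p.1)) ?_ ?_ ?_ ?_
          · intro p hp
            have hsw : (if z = x + eV n p.2 + eV n p.1 then w p.2 * w p.1 else 0)
                = (if z = x + eV n p.1 + eV n p.2 then w p.1 * w p.2 else 0) := by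
              rw [mul_comm]
              refine if_congr ?_ rfl rfl
              constructor
              · intro h; rw [h, add_assoc, add_assoc, add_comm (eV n p.2)]
              · intro h; rw [h, add_assoc, add_assoc, add_comm (eV n p.1)]
            rw [hsw, CharTwo.add_self_eq_zero]
          · intro p hp _
            simp only [Finset.mem_filter] at hp
            intro hEq
            exact hp.2 (congrArg Prod.snd hEq)
          · intro p hp
            simp only [Finset.mem_filter, Finset.mem_product] at hp ⊢
            exact ⟨⟨Finset.mem_univ _, Finset.mem_univ _⟩, fun h => hp.2 h.symm⟩
          · intro p hp; rfl
        rw [hdiag, hoff, add_zero]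

/-- weighted adjacency matrix over the whole cube -/
def Wmat (w : Fin n → F) : Matrix (Fin n → ZMod 2) (Fin n → ZMod 2) F :=
  fun x y => Wf w x y

lemma Wmat_sq (hsum : ∑ i, w i = 0) : Wmat w * Wmat w = 0 := by
  ext x z
  rw [Matrix.mul_apply]
  exact Wf_mul w hsum x z

lemma finrank_range_le (hsum : ∑ i, w i = 0) (hn : 1 ≤ n) :
    Module.finrank F (LinearMap.range (Wmat w).mulVecLin) ≤ 2 ^ (n - 1) := by
  have hcomp : (Wmat w).mulVecLin ∘ₗ (Wmat w).mulVecLin = 0 := by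
    rw [← Matrix.mulVecLin_mul, Wmat_sq w hsum]
    exact Matrix.mulVecLin_zero
  have hle : LinearMap.range (Wmat w).mulVecLin ≤ LinearMap.ker (Wmat w).mulVecLin := by
    rintro x ⟨y, rfl⟩
    have := congrFun (congrArg DFunLike.coe hcomp) y
    simpa using this
  have h1 : Module.finrank F (LinearMap.range (Wmat w).mulVecLin)
      ≤ Module.finrank F (LinearMap.ker (Wmat w).mulVecLin) :=
    Submodule.finrank_mono hle
  have h2 : Module.finrank F (LinearMap.range (Wmat w).mulVecLin)
      + Module.finrank F (LinearMap.ker (Wmat w).mulVecLin)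
      = Module.finrank F ((Fin n → ZMod 2) → F) :=
    LinearMap.finrank_range_add_finrank_ker _
  have h3 : Module.finrank F ((Fin n → ZMod 2) → F) = 2 ^ n := by
    rw [Module.finrank_fintype_fun_eq_card]
    rw [Fintype.card_fun]
    simp [ZMod.card 2]
  have h4 : 2 ^ n = 2 ^ (n - 1) * 2 := by
    rw [← pow_succ]
    congr 1
    omega
  omega

end Wf

section Det

variable {F : Type} [Field F] [CharP F 2]

lemma det_ne_zero (w : Fin n → F) (hw : ∀ i, w i ≠ 0)
    (A : Set (Fin n → ZMod 2)) [Fintype ↥A]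
    (huniq : ∃! N : ((hypercube n).induce A).Subgraph, N.IsPerfectMatching) :
    (Matrix.of (fun a b : ↥A => Wf w a.1 b.1)).det ≠ 0 := by
  classical
  set G := (hypercube n).induce A with hG
  obtain ⟨N, hN, hNuniq⟩ := huniq
  have hm : ∀ v : ↥A, ∃! u, N.Adj v u :=
    SimpleGraph.Subgraph.isPerfectMatching_iff.1 hN
  set p : ↥A → ↥A := fun v => (hm v).choose with hp_def
  have hp : ∀ v, N.Adj v (p v) := fun v => (hm v).choose_spec.1
  have hpu : ∀ v u, N.Adj v u → u = p v := fun v u h => (hm v).choose_spec.2 u h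
  have hpp : ∀ v, p (p v) = v := fun v => ((hpu (p v) v (N.adj_symm (hp v)))).symm
  set σ₀ : Equiv.Perm ↥A := ⟨p, p, hpp, hpp⟩ with hσ₀
  -- characterization of "good" permutations
  have hGood₀ : ∀ a : ↥A, G.Adj a (σ₀ a) := fun a => N.adj_sub (hp a)
  have hGoodUniq : ∀ σ : Equiv.Perm ↥A, σ * σ = 1 → (∀ a, G.Adj a (σ a)) → σ = σ₀ := by
    intro σ hinv hadj
    have hinv'' : ∀ a, σ (σ a) = a := by
      intro a
      have := DFunLike.congr_fun hinv a
      simpa [Equiv.Perm.mul_apply] using this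
    set N' : ((hypercube n).induce A).Subgraph :=
      { verts := Set.univ
        Adj := fun u v => σ u = v ∨ σ v = u
        adj_sub := by
          rintro u v (h | h)
          · exact h ▸ hadj u
          · exact h ▸ (G.adj_symm (hadj v))
        edge_vert := fun _ => Set.mem_univ _
        symm := by constructor; rintro u v (h | h); exact Or.inr h; exact Or.inl h } with hN'
    have hN'pm : N'.IsPerfectMatching := by
      constructor
      · intro v _
        refine ⟨σ v, Or.inl rfl, ?_⟩
        rintro u (h | h)
        · exact h.symm
        · rw [← h, hinv'' u]
      · intro v; exact Set.mem_univ _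
    have hEq : N' = N := hNuniq N' hN'pm
    apply Equiv.ext
    intro a
    have hadj : N.Adj a (σ a) := by rw [← hEq]; exact Or.inl rfl
    rw [hσ₀]
    exact hpu a (σ a) hadj
  have hσ₀inv : σ₀ * σ₀ = 1 := by
    apply Equiv.ext
    intro a
    exact hpp a
  -- the matrix
  set M : Matrix ↥A ↥A F := Matrix.of (fun a b : ↥A => Wf w a.1 b.1) with hM
  have hMsymm : ∀ a b, M a b = M b a := fun a b => Wf_symm w a.1 b.1
  have hMzero : ∀ a b : ↥A, ¬ G.Adj a b → M a b = 0 := by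
    intro a b h
    apply Wf_not_adj
    intro hc
    exact h hc
  -- determinant computation
  have hdet1 : M.det = ∑ σ : Equiv.Perm ↥A, ∏ i, M (σ i) i := by
    rw [Matrix.det_apply]
    refine Finset.sum_congr rfl fun σ _ => ?_
    rcases Int.units_eq_one_or (Equiv.Perm.sign σ) with h | h <;> rw [h]
    · rw [one_smul]
    · rw [Units.smul_def]
      simp only [Units.val_neg, Units.val_one, neg_smul, one_smul]
      rw [CharTwo.neg_eq]
  have hterm_symm : ∀ σ : Equiv.Perm ↥A, ∏ i, M (σ i) i = ∏ i, M i (σ i) :=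
    fun σ => Finset.prod_congr rfl fun i _ => hMsymm (σ i) i
  have hsplit := Finset.sum_filter_add_sum_filter_not (Finset.univ : Finset (Equiv.Perm ↥A))
    (fun σ => σ * σ = 1) (fun σ => ∏ i, M (σ i) i)
  have hnoninv : ∑ σ ∈ (Finset.univ : Finset (Equiv.Perm ↥A)).filter (fun σ => ¬ σ * σ = 1),
      ∏ i, M (σ i) i = 0 := by
    refine Finset.sum_involution (fun σ _ => σ⁻¹) ?_ ?_ ?_ ?_
    · intro σ hσ
      have : ∏ i, M (σ⁻¹ i) i = ∏ i, M (σ i) i := by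
        have h1 : ∏ i, M (σ⁻¹ i) i = ∏ i, M (σ⁻¹ (σ i)) (σ i) :=
          (Equiv.prod_comp σ (fun j => M (σ⁻¹ j) j)).symm
        rw [h1]
        refine Finset.prod_congr rfl fun i _ => ?_
        rw [show σ⁻¹ (σ i) = i from σ.symm_apply_apply i]
        exact hMsymm i (σ i)
      rw [this, CharTwo.add_self_eq_zero]
    · intro σ hσ _
      simp only [Finset.mem_filter] at hσ
      intro hEq
      have hEq' : σ⁻¹ = σ := hEq
      apply hσ.2
      nth_rewrite 2 [← hEq']
      exact mul_inv_cancel σ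
    · intro σ hσ
      simp only [Finset.mem_filter, Finset.mem_univ, true_and] at hσ ⊢
      intro hc
      apply hσ
      have := congrArg (fun τ => τ⁻¹) hc
      simpa [mul_inv_rev] using this
    · intro σ _; simp
  have hinvsum : ∑ σ ∈ (Finset.univ : Finset (Equiv.Perm ↥A)).filter (fun σ => σ * σ = 1),
      ∏ i, M (σ i) i = ∏ i, M (σ₀ i) i := by
    refine Finset.sum_eq_single_of_mem σ₀ ?_ ?_
    · simp only [Finset.mem_filter, Finset.mem_univ, true_and]
      exact hσ₀inv
    · intro σ hσ hne
      simp only [Finset.mem_filter, Finset.mem_univ, true_and] at hσ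
      by_cases hg : ∀ a, G.Adj a (σ a)
      · exact absurd (hGoodUniq σ hσ hg) hne
      · push_neg at hg
        obtain ⟨a, ha⟩ := hg
        refine Finset.prod_eq_zero (Finset.mem_univ a) ?_
        rw [hMsymm (σ a) a]
        exact hMzero a (σ a) ha
  have hdet : M.det = ∏ i, M (σ₀ i) i := by
    rw [hdet1, ← hsplit, hnoninv, add_zero, hinvsum]
  rw [hdet]
  rw [Finset.prod_ne_zero_iff]
  intro a _
  rw [hMsymm (σ₀ a) a]
  have hadj : (hypercube n).Adj a.1 (σ₀ a).1 := hGood₀ a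
  exact Wf_ne_zero_of_adj w hw hadj

end Det

theorem aux_bound {F : Type} [Field F] [CharP F 2] (w : Fin n → F)
    (hw : ∀ i, w i ≠ 0) (hsum : ∑ i, w i = 0) (hn : 1 ≤ n)
    (A : Set (Fin n → ZMod 2))
    (huniq : ∃! N : ((hypercube n).induce A).Subgraph, N.IsPerfectMatching) :
    A.ncard ≤ 2 ^ (n - 1) := by
  classical
  haveI : Fintype ↥A := Fintype.ofFinite ↥A
  set M : Matrix ↥A ↥A F := Matrix.of (fun a b : ↥A => Wf w a.1 b.1) with hM
  have hdet : M.det ≠ 0 := det_ne_zero w hw A huniq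
  set rows : ↥A → ((Fin n → ZMod 2) → F) := fun a => fun v => Wf w a.1 v with hrows
  have hindep : LinearIndependent F rows := by
    rw [Fintype.linearIndependent_iff]
    intro c hc a
    have hvm : Matrix.vecMul c M = 0 := by
      funext b
      have hcb := congrFun hc (b : Fin n → ZMod 2)
      simp only [Finset.sum_apply, Pi.smul_apply, Pi.zero_apply, smul_eq_mul] at hcb
      simpa [Matrix.vecMul, dotProduct, hrows, hM] using hcb
    have hunit : IsUnit M.det := isUnit_iff_ne_zero.2 hdet
    have hczero : c = 0 := by
      calc c = Matrix.vecMul c 1 := (Matrix.vecMul_one c).symm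
        _ = Matrix.vecMul c (M * M⁻¹) := by rw [Matrix.mul_nonsing_inv M hunit]
        _ = Matrix.vecMul (Matrix.vecMul c M) M⁻¹ := (Matrix.vecMul_vecMul c M M⁻¹).symm
        _ = Matrix.vecMul 0 M⁻¹ := by rw [hvm]
        _ = 0 := Matrix.zero_vecMul _
    exact congrFun hczero a
  have hmem : ∀ a : ↥A, rows a ∈ LinearMap.range (Wmat w).mulVecLin := by
    intro a
    refine ⟨Pi.single (a : Fin n → ZMod 2) 1, ?_⟩
    funext v
    rw [Matrix.mulVecLin_apply, Matrix.mulVec_single_one]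
    exact Wf_symm w v a.1
  set rows' : ↥A → ↥(LinearMap.range (Wmat w).mulVecLin) := fun a => ⟨rows a, hmem a⟩
    with hrows'
  have hindep' : LinearIndependent F rows' := by
    apply LinearIndependent.of_comp (Submodule.subtype _)
    exact hindep
  have hcard : Fintype.card ↥A ≤ Module.finrank F
      ↥(LinearMap.range (Wmat w).mulVecLin) :=
    hindep'.fintype_card_le_finrank
  have hrank := finrank_range_le w hsum hn
  have hA : A.ncard = Fintype.card ↥A := by
    rw [← Nat.card_coe_set_eq, Nat.card_eq_fintype_card]
  omega

lemma exists_weights (n : ℕ) (hn : 2 ≤ n) :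
    ∃ w : Fin n → GaloisField 2 2, (∀ i, w i ≠ 0) ∧ ∑ i, w i = 0 := by
  classical
  set F := GaloisField 2 2 with hF
  haveI : Fintype F := Fintype.ofFinite F
  have hcard : Fintype.card F = 4 := by
    have h := GaloisField.card 2 2 (by norm_num)
    rw [Nat.card_eq_fintype_card] at h
    simpa using h
  rcases Nat.even_or_odd n with he | ho
  · refine ⟨fun _ => 1, fun _ => one_ne_zero, ?_⟩
    rw [Finset.sum_const, Finset.card_univ, Fintype.card_fin, nsmul_eq_mul, mul_one]
    exact (CharP.cast_eq_zero_iff F 2 n).2 he.two_dvd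
  · -- get a cube root of unity
    obtain ⟨x, hx0, hx1⟩ : ∃ x : F, x ≠ 0 ∧ x ≠ 1 := by
      by_contra h
      push_neg at h
      have hsub : (Finset.univ : Finset F) ⊆ {0, 1} := by
        intro y _
        rcases eq_or_ne y 0 with rfl | hy
        · simp
        · simp [h y hy]
      have := Finset.card_le_card hsub
      rw [Finset.card_univ, hcard] at this
      have h2 : ({0, 1} : Finset F).card ≤ 2 := Finset.card_insert_le _ _ |>.trans (by simp)
      omega
    have hx3 : x ^ 3 = 1 := by
      have := FiniteField.pow_card_sub_one_eq_one x hx0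
      rwa [hcard] at this
    have hxsum : x ^ 2 + x + 1 = 0 := by
      have hfac : (x + 1) * (x ^ 2 + x + 1) = 0 := by
        have h2 : (2 : F) = 0 := CharTwo.two_eq_zero
        linear_combination hx3 + (x ^ 2 + x + 1) * h2
      rcases mul_eq_zero.1 hfac with h | h
      · exfalso
        apply hx1
        have h2 : (1 : F) + 1 = 0 := CharTwo.add_self_eq_zero 1
        linear_combination h - h2
      · exact h
    have h0n : 0 < n := by omega
    have h1n : 1 < n := by omega
    set i0 : Fin n := ⟨0, h0n⟩ with hi0
    set i1 : Fin n := ⟨1, h1n⟩ with hi1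
    have hne : i1 ≠ i0 := by
      simp [hi0, hi1, Fin.ext_iff]
    refine ⟨fun i => if i = i0 then x else if i = i1 then x ^ 2 else 1, ?_, ?_⟩
    · intro i
      by_cases h0 : i = i0
      · simpa [h0] using hx0
      · by_cases h1 : i = i1
        · show (if i = i0 then x else if i = i1 then x ^ 2 else 1) ≠ 0
          rw [if_neg h0, if_pos h1]
          exact pow_ne_zero 2 hx0
        · simp [h0, h1]
    · rw [← Finset.add_sum_erase _ _ (Finset.mem_univ i0), if_pos rfl]
      rw [← Finset.add_sum_erase _ _ (Finset.mem_erase.2 ⟨hne, Finset.mem_univ i1⟩)]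
      rw [if_neg hne, if_pos rfl]
      have hrest : ∑ i ∈ (Finset.univ.erase i0).erase i1,
          (if i = i0 then x else if i = i1 then x ^ 2 else 1) = ((n - 2 : ℕ) : F) := by
        have hone : ∀ i ∈ (Finset.univ.erase i0).erase i1,
            (if i = i0 then x else if i = i1 then x ^ 2 else 1) = 1 := by
          intro i hi
          rw [Finset.mem_erase, Finset.mem_erase] at hi
          rw [if_neg hi.2.1, if_neg hi.1]
        rw [Finset.sum_congr rfl hone, Finset.sum_const, nsmul_eq_mul, mul_one]
        congr 1
        rw [Finset.card_erase_of_mem (Finset.mem_erase.2 ⟨hne, Finset.mem_univ i1⟩)]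
        rw [Finset.card_erase_of_mem (Finset.mem_univ i0)]
        rw [Finset.card_univ, Fintype.card_fin]
        omega
      rw [hrest]
      have hodd2 : Odd (n - 2) := by
        obtain ⟨k, hk⟩ := ho
        exact ⟨k - 1, by omega⟩
      have hcast : ((n - 2 : ℕ) : F) = 1 := by
        obtain ⟨m, hm⟩ := hodd2
        have hcc := congrArg (fun k : ℕ => (k : F)) hm
        rw [hcc]
        push_cast
        have h2 : (2 : F) = 0 := CharTwo.two_eq_zero
        rw [Nat.cast_mul, Nat.cast_ofNat, h2, zero_mul, zero_add]
      rw [hcast]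
      linear_combination hxsum

end UniquePMAux

/-- Any induced subgraph of `Q_n` with a unique perfect matching has at most
`2^(n-1)` vertices, for all `n ≥ 2`. -/
theorem induced_unique_pm_hypercube (n : ℕ) (hn : 2 ≤ n)
    (A : Set (Fin n → ZMod 2))
    (huniq : ∃! N : ((hypercube n).induce A).Subgraph, N.IsPerfectMatching) :
    A.ncard ≤ 2 ^ (n - 1) := by
  obtain ⟨w, hw0, hwsum⟩ := UniquePMAux.exists_weights n hn
  exact UniquePMAux.aux_bound w hw0 hwsum (by omega) A huniq
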